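/- Let n ≥ 2, let E be a finite-dimensional real inner product space, f : E → ℝ any function, and a₁, …, a_{n+1} ∈ E affinely independent. For 1 ≤ i ≤ n−1 let āᵢ be the reflection of aᵢ across the affine span of a_{i+1}, …, a_{n+1}, and set r̄ = Σ_{i=1}^{n−1} ((f(āᵢ) − f(aᵢ))/‖āᵢ − aᵢ‖²) • (āᵢ − aᵢ) + ((f(a_{n+1}) − f(aₙ))/‖a_{n+1} − aₙ‖²) • (a_{n+1} − aₙ). In the Clifford algebra of the quadratic form Q(v) = ⟪v,v⟫ on E, let P = ι(ā₁ − a₁) * ⋯ * ι(ā_{n−1} − a_{n−1}) (ordered product), and for 1 ≤ i ≤ n−1 let Pᵢ denote the ordered product over j ∈ {1,…,n−1}, j ≠ i, of the ι(āⱼ − aⱼ), multiplied on the right by ι(a_{n+1} − aₙ). Then Σ_{i=1}^{n−1} (−1)^{i+1} (f(āᵢ) − f(aᵢ)) • Pᵢ + (−1)^{n+1} (f(a_{n+1}) − f(aₙ)) • P = ι(r̄) * P * ι(a_{n+1} − aₙ). -/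

import Mathlib

open EuclideanGeometry CliffordAlgebra
open scoped InnerProductSpace

/-- Orthogonal reflection of the point `p` across the affine span of the set `s`
(Mathlib's `EuclideanGeometry.reflection`), extended by the identity if `s` is empty. -/
noncomputable def mirror {E : Type*} [NormedAddCommGroup E] [InnerProductSpace ℝ E]
    [FiniteDimensional ℝ E] (s : Set E) (p : E) : E :=
  open scoped Classical in
  if hs : s.Nonempty then
    haveI : Nonempty (affineSpan ℝ s) := ((affineSpan_nonempty ℝ (s := s)).mpr hs).to_subtype
    EuclideanGeometry.reflection (affineSpan ℝ s) p
  else p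

/-- Given points `a 0, …, a n` (the paper's `a₁, …, a_{n+1}`), `mirrored n a i` (for
`i : Fin (n-1)`, the paper's index `i+1 ∈ {1, …, n−1}`) is the reflection of the point `a i`
across the affine span of the points `a j`, `j > i`. -/
noncomputable def mirrored {E : Type*} [NormedAddCommGroup E] [InnerProductSpace ℝ E]
    [FiniteDimensional ℝ E] (n : ℕ) (a : Fin (n + 1) → E) (i : Fin (n - 1)) : E :=
  mirror (a '' {j | Fin.castLE (by omega) i < j}) (a (Fin.castLE (by omega) i))

/-- The quadratic form `v ↦ ⟪v, v⟫` of a real inner product space. -/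
noncomputable def Qf (E : Type*) [NormedAddCommGroup E] [InnerProductSpace ℝ E] :
    QuadraticForm ℝ E :=
  LinearMap.BilinMap.toQuadraticMap (innerₗ E)

section helpers
variable {A : Type*} [Ring A] [Algebra ℝ A]
lemma anticomm_mul_prod (x : A) (l : List A) (h : ∀ y ∈ l, x * y = -(y * x)) :
    x * l.prod = ((-1 : ℝ) ^ l.length) • (l.prod * x) := by
  induction l with
  | nil => simp
  | cons y t ih =>
      have hy := h y List.mem_cons_self
      have ht : ∀ z ∈ t, x * z = -(z * x) := fun z hz => h z (List.mem_cons_of_mem _ hz)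
      rw [List.prod_cons, ← mul_assoc, hy, neg_mul, mul_assoc, ih ht, mul_smul_comm,
        List.length_cons, pow_succ, ← neg_smul, mul_neg_one]
      simp [mul_assoc]

lemma mul_prod_split (x : A) (l₁ l₂ : List A) (c : ℝ)
    (h1 : ∀ y ∈ l₁, x * y = -(y * x)) (hx : x * x = c • 1) :
    x * (l₁ ++ x :: l₂).prod = ((-1 : ℝ) ^ l₁.length * c) • (l₁ ++ l₂).prod := by
  rw [List.prod_append, List.prod_cons, ← mul_assoc, anticomm_mul_prod x l₁ h1,
    smul_mul_assoc, mul_assoc l₁.prod x, ← mul_assoc x x, hx, smul_mul_assoc, one_mul,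
    mul_smul_comm, smul_smul, List.prod_append]

lemma mul_prod_ofFn {m : ℕ} (g : Fin m → A) (i : Fin m) (c : ℝ)
    (hanti : ∀ j : Fin m, j ≠ i → g i * g j = -(g j * g i))
    (hsq : g i * g i = c • 1) :
    g i * (List.ofFn g).prod =
      ((-1 : ℝ) ^ (i : ℕ) * c) • ((List.ofFn g).eraseIdx (i : ℕ)).prod := by
  set L := List.ofFn g with hL
  have hlen : L.length = m := List.length_ofFn
  have hi : (i : ℕ) < L.length := by rw [hlen]; exact i.2
  have hgi : L[(i : ℕ)] = g i := by simp [hL]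
  have hsplit : L = L.take (i : ℕ) ++ g i :: L.drop ((i : ℕ) + 1) := by
    rw [← hgi, ← List.drop_eq_getElem_cons hi, List.take_append_drop]
  have htake : ∀ y ∈ L.take (i : ℕ), g i * y = -(y * g i) := by
    intro y hy
    rw [List.mem_iff_getElem] at hy
    obtain ⟨k, hk, rfl⟩ := hy
    have hk' : k < (i : ℕ) := by
      have := hk; rw [List.length_take] at this; omega
    have hkm : k < m := by omega
    rw [List.getElem_take]
    have : L[k] = g ⟨k, hkm⟩ := by simp [hL]
    rw [this]
    exact hanti ⟨k, hkm⟩ (by simp [Fin.ext_iff]; omega)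
  have key := mul_prod_split (g i) (L.take (i : ℕ)) (L.drop ((i : ℕ) + 1)) c htake hsq
  rw [List.length_take, min_eq_left (le_of_lt hi)] at key
  calc g i * L.prod = g i * (L.take (i : ℕ) ++ g i :: L.drop ((i : ℕ) + 1)).prod := by
        rw [← hsplit]
    _ = _ := by rw [key, List.eraseIdx_eq_take_drop_succ]

end helpers

section cliff
variable {E : Type*} [NormedAddCommGroup E] [InnerProductSpace ℝ E]

lemma Qf_apply (u : E) : Qf E u = ‖u‖ ^ 2 := by
  simp [Qf, LinearMap.BilinMap.toQuadraticMap_apply, innerₗ_apply_apply,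
    real_inner_self_eq_norm_sq]

lemma ι_sq (u : E) : ι (Qf E) u * ι (Qf E) u = (‖u‖ ^ 2 : ℝ) • (1 : CliffordAlgebra (Qf E)) := by
  rw [ι_sq_scalar, Qf_apply, Algebra.algebraMap_eq_smul_one]

lemma ι_anticomm {u u' : E} (h : ⟪u, u'⟫_ℝ = 0) :
    ι (Qf E) u * ι (Qf E) u' = -(ι (Qf E) u' * ι (Qf E) u) := by
  have h' : ⟪u', u⟫_ℝ = 0 := by rw [real_inner_comm]; exact h
  have hp : QuadraticMap.polar (Qf E) u u' = 0 := by
    simp only [QuadraticMap.polar, Qf_apply, ← real_inner_self_eq_norm_sq,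
      inner_add_add_self, h, h']
    ring
  have h2 := ι_mul_ι_add_swap (Q := Qf E) u u'
  rw [hp, map_zero] at h2
  exact eq_neg_of_add_eq_zero_left h2

end cliff

/-- The mean multi-difference pseudo-vector (times `2^{n−1}`) equals the geometric product of
the mean multi-difference quotient vector `r̄` with the pseudo-scalar
`(ā₁ − a₁) ⋯ (ā_{n−1} − a_{n−1})(a_{n+1} − aₙ)` in the Clifford algebra of `Q(v) = ⟪v, v⟫`
(`P` is the ordered product of the `ι (āⱼ − aⱼ)`, and `Pᵢ` omits the `i`-th factor and is
multiplied on the right by `ι (a_{n+1} − aₙ)`; indexing is 0-based). -/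
theorem mean_multi_difference_eq_clifford_product
    {E : Type*} [NormedAddCommGroup E] [InnerProductSpace ℝ E] [FiniteDimensional ℝ E]
    (n : ℕ) (hn : 2 ≤ n) (f : E → ℝ) (a : Fin (n + 1) → E) (ha : AffineIndependent ℝ a) :
    let v : Fin (n - 1) → E := fun i => mirrored n a i - a (Fin.castLE (by omega) i)
    let w : E := a (Fin.last n) - a ⟨n - 1, by omega⟩
    let P : CliffordAlgebra (Qf E) := (List.ofFn fun j : Fin (n - 1) => ι (Qf E) (v j)).prod
    let Pp : Fin (n - 1) → CliffordAlgebra (Qf E) := fun i =>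
      ((List.ofFn fun j : Fin (n - 1) => ι (Qf E) (v j)).eraseIdx (i : ℕ)).prod * ι (Qf E) w
    let rbar : E := (∑ i : Fin (n - 1),
        ((f (mirrored n a i) - f (a (Fin.castLE (by omega) i))) / ‖v i‖ ^ 2) • v i) +
      ((f (a (Fin.last n)) - f (a ⟨n - 1, by omega⟩)) / ‖w‖ ^ 2) • w
    (∑ i : Fin (n - 1),
        ((-1 : ℝ) ^ (i : ℕ) * (f (mirrored n a i) - f (a (Fin.castLE (by omega) i)))) • Pp i) +
      ((-1 : ℝ) ^ (n + 1) * (f (a (Fin.last n)) - f (a ⟨n - 1, by omega⟩))) • P =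
      ι (Qf E) rbar * P * ι (Qf E) w := by
  intro v w P Pp rbar
  -- geometric facts
  have h19 : n - 1 ≤ n + 1 := by omega
  set ci : Fin (n - 1) → Fin (n + 1) := fun i => Fin.castLE h19 i with hci
  set s : Fin (n - 1) → Set E := fun i => a '' {j | ci i < j} with hs
  have hlast : ∀ i : Fin (n - 1), ci i < Fin.last n := by
    intro i
    simp only [Fin.lt_def, hci, Fin.coe_castLE, Fin.val_last]
    omega
  have hn1lt : ∀ i : Fin (n - 1), ci i < (⟨n - 1, by omega⟩ : Fin (n + 1)) := by
    intro i
    have := i.2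
    simp only [Fin.lt_def, hci, Fin.coe_castLE]
    omega
  have hsne : ∀ i : Fin (n - 1), (s i).Nonempty := fun i =>
    ⟨a (Fin.last n), Set.mem_image_of_mem a (hlast i)⟩
  haveI hinst : ∀ i : Fin (n - 1), Nonempty (affineSpan ℝ (s i)) := fun i =>
    ((affineSpan_nonempty ℝ (s := s i)).mpr (hsne i)).to_subtype
  have hmirror : ∀ i : Fin (n - 1),
      mirrored n a i = EuclideanGeometry.reflection (affineSpan ℝ (s i)) (a (ci i)) := by
    intro i
    rw [mirrored, mirror, dif_pos (hsne i)]
  have hv_eq : ∀ i : Fin (n - 1), v i = (2 : ℝ) •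
      ((EuclideanGeometry.orthogonalProjection (affineSpan ℝ (s i)) (a (ci i)) : E)
        - a (ci i)) := by
    intro i
    show mirrored n a i - a (Fin.castLE (by omega) i) = _
    rw [hmirror i, EuclideanGeometry.reflection_apply']
    simp only [vsub_eq_sub, vadd_eq_add]
    module
  have hv_orth : ∀ i : Fin (n - 1), v i ∈ (affineSpan ℝ (s i)).directionᗮ := by
    intro i
    rw [hv_eq i]
    refine Submodule.smul_mem _ _ ?_
    have := EuclideanGeometry.orthogonalProjection_vsub_mem_direction_orthogonal
      (affineSpan ℝ (s i)) (a (ci i))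
    rwa [vsub_eq_sub] at this
  have hdir_mem : ∀ (i : Fin (n - 1)) (x y : E), x ∈ affineSpan ℝ (s i) →
      y ∈ affineSpan ℝ (s i) → x - y ∈ (affineSpan ℝ (s i)).direction := by
    intro i x y hx hy
    have := AffineSubspace.vsub_mem_direction hx hy
    rwa [vsub_eq_sub] at this
  have hv_dir : ∀ i j : Fin (n - 1), i < j → v j ∈ (affineSpan ℝ (s i)).direction := by
    intro i j hij
    have hcij : ci i < ci j := by
      simpa only [Fin.lt_def, hci, Fin.coe_castLE] using hij
    have hsub : s j ⊆ s i := Set.image_mono fun k hk => lt_trans hcij hk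
    rw [hv_eq j]
    refine Submodule.smul_mem _ _ (hdir_mem i _ _ ?_ ?_)
    · exact affineSpan_mono ℝ hsub (EuclideanGeometry.orthogonalProjection_mem _)
    · exact mem_affineSpan ℝ (Set.mem_image_of_mem a hcij)
  have hw_dir : ∀ i : Fin (n - 1), w ∈ (affineSpan ℝ (s i)).direction := by
    intro i
    refine hdir_mem i _ _ ?_ ?_
    · exact mem_affineSpan ℝ (Set.mem_image_of_mem a (hlast i))
    · exact mem_affineSpan ℝ (Set.mem_image_of_mem a (hn1lt i))
  have hvv : ∀ i j : Fin (n - 1), i ≠ j → ⟪v i, v j⟫_ℝ = 0 := by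
    have main : ∀ i j : Fin (n - 1), i < j → ⟪v i, v j⟫_ℝ = 0 := by
      intro i j hij
      rw [real_inner_comm]
      exact (Submodule.mem_orthogonal _ _).mp (hv_orth i) _ (hv_dir i j hij)
    intro i j hij
    rcases lt_or_gt_of_ne hij with h | h
    · exact main i j h
    · rw [real_inner_comm]; exact main j i h
  have hvw : ∀ i : Fin (n - 1), ⟪v i, w⟫_ℝ = 0 := by
    intro i
    rw [real_inner_comm]
    exact (Submodule.mem_orthogonal _ _).mp (hv_orth i) _ (hw_dir i)
  have hvne : ∀ i : Fin (n - 1), v i ≠ 0 := by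
    intro i hv0
    have hrefl : EuclideanGeometry.reflection (affineSpan ℝ (s i)) (a (ci i)) = a (ci i) := by
      have : mirrored n a i - a (Fin.castLE (by omega) i) = 0 := hv0
      have h2 : mirrored n a i = a (Fin.castLE (by omega) i) := by
        rwa [sub_eq_zero] at this
      rw [← hmirror i]
      exact h2
    rw [EuclideanGeometry.reflection_eq_self_iff] at hrefl
    have hsub : s i ⊆ a '' (Set.univ \ {ci i}) := by
      refine Set.image_mono fun k hk => ⟨Set.mem_univ _, ?_⟩
      exact fun hke => absurd hke.symm (ne_of_lt hk)
    exact ha.notMem_affineSpan_diff (ci i) Set.univ (affineSpan_mono ℝ hsub hrefl)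
  have hwne : w ≠ 0 := by
    refine sub_ne_zero.mpr (ha.injective.ne ?_)
    simp only [ne_eq, Fin.ext_iff, Fin.val_last]
    omega
  -- Clifford algebra part
  set g : Fin (n - 1) → CliffordAlgebra (Qf E) := fun j => ι (Qf E) (v j) with hg
  have hP : P = (List.ofFn g).prod := rfl
  have hiP : ∀ i : Fin (n - 1), ι (Qf E) (v i) * P =
      ((-1 : ℝ) ^ (i : ℕ) * ‖v i‖ ^ 2) • ((List.ofFn g).eraseIdx (i : ℕ)).prod := by
    intro i
    exact mul_prod_ofFn g i (‖v i‖ ^ 2)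
      (fun j hj => ι_anticomm (hvv i j (fun h => hj h.symm))) (ι_sq _)
  have hwP : ι (Qf E) w * P = ((-1 : ℝ) ^ (n - 1)) • (P * ι (Qf E) w) := by
    have := anticomm_mul_prod (ι (Qf E) w) (List.ofFn g) ?_
    · rwa [List.length_ofFn] at this
    · intro y hy
      rw [List.mem_ofFn] at hy
      obtain ⟨j, rfl⟩ := hy
      exact ι_anticomm (by rw [real_inner_comm]; exact hvw j)
  have hrb : ι (Qf E) rbar =
      (∑ i : Fin (n - 1),
          ((f (mirrored n a i) - f (a (Fin.castLE (by omega) i))) / ‖v i‖ ^ 2) •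
            ι (Qf E) (v i)) +
        ((f (a (Fin.last n)) - f (a ⟨n - 1, by omega⟩)) / ‖w‖ ^ 2) • ι (Qf E) w := by
    simp only [rbar, map_add, map_sum, map_smul]
  rw [hrb, add_mul, add_mul, Finset.sum_mul, Finset.sum_mul]
  congr 1
  · refine Finset.sum_congr rfl fun i _ => ?_
    have hsc : ∀ d : ℝ, d / ‖v i‖ ^ 2 * ((-1 : ℝ) ^ (i : ℕ) * ‖v i‖ ^ 2)
        = (-1 : ℝ) ^ (i : ℕ) * d := by
      intro d
      have h0 : ‖v i‖ ^ 2 ≠ 0 := by simpa using hvne i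
      have h1 : ‖v i‖ ≠ 0 := norm_ne_zero_iff.mpr (hvne i)
      field_simp
    rw [smul_mul_assoc, smul_mul_assoc, hiP i, smul_mul_assoc, smul_smul, hsc]
  · rw [smul_mul_assoc, smul_mul_assoc, hwP, smul_mul_assoc, mul_assoc, ι_sq, mul_smul_comm,
      mul_one, smul_smul, smul_smul]
    congr 1
    have h0 : ‖w‖ ^ 2 ≠ 0 := by simpa using hwne
    have hpow : ((-1 : ℝ)) ^ (n + 1) = ((-1 : ℝ)) ^ (n - 1) := by
      have : n + 1 = (n - 1) + 2 := by omega
      rw [this, pow_add]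
      norm_num
    field_simp [hpow]
    rw [hpow]
    ring
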